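/- Let (A_n)_{n≥0} be positive random variables and (B_n)_{n≥0} real random variables with (B_n) i.i.d. and independent of (A_n, τ), where τ ≥ 1 is a positive-integer-valued random variable. Suppose α ≥ 1, E[|B_0|^α] < ∞, and Σ_{n=0}^∞ (E[(A_0 ⋯ A_{n-1})^α 1_{τ > n}])^{1/α} < ∞. Then E[(Σ_{n=0}^{τ-1} (A_0 ⋯ A_{n-1}) |B_n|)^α] < ∞. -/

import Mathlib

open MeasureTheory ProbabilityTheory
open scoped ENNReal NNReal

/-- Minkowski's inequality for a countable sum of `ℝ≥0∞`-valued functions. -/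
lemma my_lintegral_Lp_tsum_le {Ω : Type*} [MeasurableSpace Ω] (μ : Measure Ω) {p : ℝ}
    (hp : 1 ≤ p) {F : ℕ → Ω → ℝ≥0∞} (hF : ∀ n, Measurable (F n)) :
    (∫⁻ ω, (∑' n, F n ω) ^ p ∂μ) ^ (1 / p) ≤ ∑' n, (∫⁻ ω, F n ω ^ p ∂μ) ^ (1 / p) := by
  have hp0 : (0 : ℝ) < p := lt_of_lt_of_le zero_lt_one hp
  have hp0' : (0 : ℝ) < 1 / p := by positivity
  have hSmeas : ∀ N : ℕ, Measurable fun ω => ∑ n ∈ Finset.range N, F n ω :=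
    fun N => Finset.measurable_sum _ fun n _ => hF n
  have hfin : ∀ N : ℕ, (∫⁻ ω, (∑ n ∈ Finset.range N, F n ω) ^ p ∂μ) ^ (1 / p) ≤
      ∑ n ∈ Finset.range N, (∫⁻ ω, F n ω ^ p ∂μ) ^ (1 / p) := by
    intro N
    induction N with
    | zero =>
        simp [ENNReal.zero_rpow_of_pos hp0, ENNReal.zero_rpow_of_pos hp0', hp0, hp0']
    | succ N ih =>
        have h := ENNReal.lintegral_Lp_add_le (μ := μ)
          (hSmeas N).aemeasurable (hF N).aemeasurable hp
        simp only [Pi.add_apply] at h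
        simp only [Finset.sum_range_succ]
        exact h.trans (add_le_add ih le_rfl)
  have hmono : Monotone fun N : ℕ => fun ω => (∑ n ∈ Finset.range N, F n ω) ^ p := by
    intro M N hMN ω
    exact ENNReal.rpow_le_rpow
      (Finset.sum_le_sum_of_subset (Finset.range_subset_range.2 hMN)) hp0.le
  have key : ∀ ω, (∑' n, F n ω) ^ p = ⨆ N : ℕ, (∑ n ∈ Finset.range N, F n ω) ^ p := by
    intro ω
    rw [ENNReal.tsum_eq_iSup_nat]
    exact Monotone.map_iSup_of_continuousAt
      (ENNReal.continuous_rpow_const.continuousAt)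
      (ENNReal.monotone_rpow_of_nonneg hp0.le)
      (by simp [ENNReal.zero_rpow_of_pos hp0, hp0])
  calc (∫⁻ ω, (∑' n, F n ω) ^ p ∂μ) ^ (1 / p)
      = (⨆ N : ℕ, ∫⁻ ω, (∑ n ∈ Finset.range N, F n ω) ^ p ∂μ) ^ (1 / p) := by
        rw [lintegral_congr key,
          lintegral_iSup (fun N => (hSmeas N).pow_const p)
            (fun M N hMN ω => hmono hMN ω)]
    _ = ⨆ N : ℕ, (∫⁻ ω, (∑ n ∈ Finset.range N, F n ω) ^ p ∂μ) ^ (1 / p) :=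
        Monotone.map_iSup_of_continuousAt
          (ENNReal.continuous_rpow_const.continuousAt)
          (ENNReal.monotone_rpow_of_nonneg hp0'.le)
          (by simp [ENNReal.zero_rpow_of_pos hp0', hp0', hp0])
    _ ≤ ∑' n, (∫⁻ ω, F n ω ^ p ∂μ) ^ (1 / p) :=
        iSup_le fun N => (hfin N).trans (ENNReal.sum_le_tsum _)

theorem minkowski_discounted_moment_bound {Ω : Type*} [MeasurableSpace Ω]
    (μ : Measure Ω) [IsProbabilityMeasure μ]
    (A : ℕ → Ω → ℝ) (B : ℕ → Ω → ℝ) (τ : Ω → ℕ)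
    (hAmeas : ∀ n, Measurable (A n)) (hBmeas : ∀ n, Measurable (B n))
    (hτmeas : Measurable τ)
    (hApos : ∀ n ω, 0 < A n ω) (hτ : ∀ ω, 1 ≤ τ ω)
    (hBiid : iIndepFun B μ)
    (hBident : ∀ n, IdentDistrib (B n) (B 0) μ μ)
    (hBindep : IndepFun (fun ω => fun n => B n ω)
      (fun ω => ((fun n => A n ω), τ ω)) μ)
    (α : ℝ) (hα : 1 ≤ α)
    (hBmom : ∫⁻ ω, ENNReal.ofReal (|B 0 ω| ^ α) ∂μ < ⊤)
    (hAsum : ∑' n : ℕ,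
      (∫⁻ ω in {ω | n < τ ω},
        ENNReal.ofReal ((∏ i ∈ Finset.range n, A i ω) ^ α) ∂μ) ^ (α⁻¹) < ⊤) :
    ∫⁻ ω, ENNReal.ofReal
      ((∑ n ∈ Finset.range (τ ω),
        (∏ i ∈ Finset.range n, A i ω) * |B n ω|) ^ α) ∂μ < ⊤ := by
  have hα0 : (0 : ℝ) < α := lt_of_lt_of_le zero_lt_one hα
  have hαinv0 : (0 : ℝ) < 1 / α := by positivity
  set P : ℕ → Ω → ℝ := fun n ω => ∏ i ∈ Finset.range n, A i ω with hPdef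
  have hPpos : ∀ n ω, 0 < P n ω := fun n ω => Finset.prod_pos fun i _ => hApos i ω
  have hPmeas : ∀ n, Measurable (P n) := fun n =>
    Finset.measurable_prod _ fun i _ => hAmeas i
  have hsets : ∀ n : ℕ, MeasurableSet {ω | n < τ ω} := fun n =>
    hτmeas (measurableSet_Ioi : MeasurableSet (Set.Ioi n))
  -- the summand functions
  set F : ℕ → Ω → ℝ≥0∞ := fun n ω =>
    Set.indicator {ω | n < τ ω} (fun ω => ENNReal.ofReal (P n ω * |B n ω|)) ω with hFdef
  have hFmeas : ∀ n, Measurable (F n) := fun n =>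
    (ENNReal.measurable_ofReal.comp ((hPmeas n).mul (hBmeas n).abs)).indicator (hsets n)
  have hterm_nonneg : ∀ (ω) (n), 0 ≤ P n ω * |B n ω| := fun ω n =>
    mul_nonneg (hPpos n ω).le (abs_nonneg _)
  -- the integrand equals (∑' n, F n ω) ^ α
  have hint : ∀ ω, ENNReal.ofReal
      ((∑ n ∈ Finset.range (τ ω), P n ω * |B n ω|) ^ α) = (∑' n, F n ω) ^ α := by
    intro ω
    have h1 : ∑' n, F n ω = ∑ n ∈ Finset.range (τ ω),
        ENNReal.ofReal (P n ω * |B n ω|) := by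
      rw [tsum_eq_sum (s := Finset.range (τ ω))
        (fun n hn => Set.indicator_of_notMem (by simpa using hn) _)]
      exact Finset.sum_congr rfl fun n hn =>
        Set.indicator_of_mem (by simpa using hn) _
    rw [h1, ← ENNReal.ofReal_rpow_of_nonneg
        (Finset.sum_nonneg fun n _ => hterm_nonneg ω n) hα0.le,
      ENNReal.ofReal_sum_of_nonneg fun n _ => hterm_nonneg ω n]
  -- compute the p-th moment of each summand via independence
  have hc : ∀ n : ℕ, ∫⁻ ω, F n ω ^ α ∂μ =
      (∫⁻ ω, ENNReal.ofReal (|B 0 ω| ^ α) ∂μ) *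
      ∫⁻ ω in {ω | n < τ ω}, ENNReal.ofReal (P n ω ^ α) ∂μ := by
    intro n
    set φ : (ℕ → ℝ) → ℝ≥0∞ := fun f => ENNReal.ofReal (|f n| ^ α) with hφdef
    set ψ : (ℕ → ℝ) × ℕ → ℝ≥0∞ := fun q =>
      Set.indicator {q : (ℕ → ℝ) × ℕ | n < q.2}
        (fun q => ENNReal.ofReal ((∏ i ∈ Finset.range n, q.1 i) ^ α)) q with hψdef
    have hφmeas : Measurable φ :=
      ENNReal.measurable_ofReal.comp
        ((Real.continuous_rpow_const hα0.le).measurable.comp (measurable_pi_apply n).abs)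
    have hψmeas : Measurable ψ := by
      apply Measurable.indicator
      · exact ENNReal.measurable_ofReal.comp
          ((Real.continuous_rpow_const hα0.le).measurable.comp
            (Finset.measurable_prod _ fun i _ => (measurable_pi_apply i).comp measurable_fst))
      · exact measurable_snd (measurableSet_Ioi : MeasurableSet (Set.Ioi n))
    have hind : IndepFun (φ ∘ fun ω => fun k => B k ω)
        (ψ ∘ fun ω => ((fun k => A k ω), τ ω)) μ := hBindep.comp hφmeas hψmeas
    have hcompφ : (φ ∘ fun ω => fun k => B k ω) =
        fun ω => ENNReal.ofReal (|B n ω| ^ α) := rfl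
    have hcompψ : (ψ ∘ fun ω => ((fun k => A k ω), τ ω)) =
        fun ω => Set.indicator {ω | n < τ ω}
          (fun ω => ENNReal.ofReal (P n ω ^ α)) ω := by
      funext ω
      by_cases h : n < τ ω
      · simp only [Function.comp_apply, hψdef]
        rw [Set.indicator_of_mem (by exact h), Set.indicator_of_mem (by exact h)]
      · simp only [Function.comp_apply, hψdef]
        rw [Set.indicator_of_notMem (by exact h), Set.indicator_of_notMem (by exact h)]
    have hpow : ∀ ω, F n ω ^ α =
        (fun ω => ENNReal.ofReal (|B n ω| ^ α)) ω *
        (fun ω => Set.indicator {ω | n < τ ω}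
          (fun ω => ENNReal.ofReal (P n ω ^ α)) ω) ω := by
      intro ω
      by_cases h : n < τ ω
      · simp only [hFdef]
        rw [Set.indicator_of_mem (by exact h), Set.indicator_of_mem (by exact h),
          ENNReal.ofReal_mul (hPpos n ω).le,
          ENNReal.mul_rpow_of_nonneg _ _ hα0.le,
          ENNReal.ofReal_rpow_of_nonneg (hPpos n ω).le hα0.le,
          ENNReal.ofReal_rpow_of_nonneg (abs_nonneg _) hα0.le, mul_comm]
      · simp only [hFdef]
        rw [Set.indicator_of_notMem (by exact h), Set.indicator_of_notMem (by exact h),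
          ENNReal.zero_rpow_of_pos hα0, mul_zero]
    have hm1 : Measurable (φ ∘ fun ω => fun k => B k ω) :=
      hφmeas.comp (measurable_pi_lambda _ fun k => hBmeas k)
    have hm2 : Measurable (ψ ∘ fun ω => ((fun k => A k ω), τ ω)) :=
      hψmeas.comp ((measurable_pi_lambda _ fun k => hAmeas k).prodMk hτmeas)
    have hmul := lintegral_mul_eq_lintegral_mul_lintegral_of_indepFun hm1 hm2 hind
    rw [hcompφ, hcompψ] at hmul
    simp only [Pi.mul_apply] at hmul
    calc ∫⁻ ω, F n ω ^ α ∂μ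
        = ∫⁻ ω, (fun ω => ENNReal.ofReal (|B n ω| ^ α)) ω *
            (fun ω => Set.indicator {ω | n < τ ω}
              (fun ω => ENNReal.ofReal (P n ω ^ α)) ω) ω ∂μ := lintegral_congr hpow
      _ = (∫⁻ ω, ENNReal.ofReal (|B n ω| ^ α) ∂μ) *
            ∫⁻ ω, Set.indicator {ω | n < τ ω}
              (fun ω => ENNReal.ofReal (P n ω ^ α)) ω ∂μ := hmul
      _ = (∫⁻ ω, ENNReal.ofReal (|B 0 ω| ^ α) ∂μ) *
            ∫⁻ ω in {ω | n < τ ω}, ENNReal.ofReal (P n ω ^ α) ∂μ := by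
          rw [lintegral_indicator (hsets n)]
          congr 1
          exact ((hBident n).comp (ENNReal.measurable_ofReal.comp
            ((Real.continuous_rpow_const hα0.le).measurable.comp
              measurable_abs))).lintegral_eq
  -- put everything together via Minkowski
  have hbound := my_lintegral_Lp_tsum_le μ hα hFmeas
  have hsum : ∑' n, (∫⁻ ω, F n ω ^ α ∂μ) ^ (1 / α) =
      (∫⁻ ω, ENNReal.ofReal (|B 0 ω| ^ α) ∂μ) ^ (1 / α) *
      ∑' n, (∫⁻ ω in {ω | n < τ ω}, ENNReal.ofReal (P n ω ^ α) ∂μ) ^ (1 / α) := by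
    rw [← ENNReal.tsum_mul_left]
    exact tsum_congr fun n => by
      rw [hc n, ENNReal.mul_rpow_of_nonneg _ _ hαinv0.le]
  have hrhs : (∫⁻ ω, ENNReal.ofReal (|B 0 ω| ^ α) ∂μ) ^ (1 / α) *
      (∑' n, (∫⁻ ω in {ω | n < τ ω}, ENNReal.ofReal (P n ω ^ α) ∂μ) ^ (1 / α)) < ⊤ := by
    apply ENNReal.mul_lt_top
    · exact ENNReal.rpow_lt_top_of_nonneg hαinv0.le hBmom.ne
    · simpa [one_div] using hAsum
  have hfinal : (∫⁻ ω, (∑' n, F n ω) ^ α ∂μ) ^ (1 / α) < ⊤ :=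
    lt_of_le_of_lt hbound (by rw [hsum]; exact hrhs)
  have hgoal : ∫⁻ ω, ENNReal.ofReal
      ((∑ n ∈ Finset.range (τ ω), P n ω * |B n ω|) ^ α) ∂μ < ⊤ := by
    rw [lintegral_congr hint]
    exact (ENNReal.rpow_lt_top_iff_of_pos hαinv0).1 hfinal
  exact hgoal
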